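/- (Border Newton Identities.) Let f ∈ ℂ[x_1,…,x_n] be homogeneous of degree d and suppose there exist γ ∈ ℂ, an integer M ≥ 1, and homogeneous linear forms ℓ'_1, …, ℓ'_m in x_1,…,x_n with coefficients in ℂ((ε)) such that γ ε^{−M} (∏_{i=1}^m (1 + ℓ'_i) − 1) has all coefficients in ℂ[[ε]] and is ≡ f (mod ε). Then the border Waring rank of f satisfies bWR(f) ≤ m. -/

import Mathlib

open MvPolynomial

noncomputable section

/-- All Laurent-series coefficients of `F` lie in `ℂ[[ε]]`, i.e. they have
no terms of negative order. -/
def HasRegularCoeffs {σ : Type*} (F : MvPolynomial σ (LaurentSeries ℂ)) : Prop :=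
  ∀ (m : σ →₀ ℕ) (k : ℤ), k < 0 → (F.coeff m).coeff k = 0

/-- `F` has all coefficients in `ℂ[[ε]]` and `F ≡ f (mod ε)`, i.e. substituting
`ε = 0` into the coefficients of `F` yields `f`. -/
def ApproxTo {σ : Type*} (F : MvPolynomial σ (LaurentSeries ℂ)) (f : MvPolynomial σ ℂ) : Prop :=
  HasRegularCoeffs F ∧ ∀ m : σ →₀ ℕ, (F.coeff m).coeff 0 = f.coeff m

/-- The Waring rank of `f` as a form of degree `d`: the least `r` such that `f` is a
sum of `r` `d`-th powers of homogeneous linear forms over `ℂ`. -/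
def waringRank {n : ℕ} (f : MvPolynomial (Fin n) ℂ) (d : ℕ) : ℕ :=
  sInf {r | ∃ ℓ : Fin r → MvPolynomial (Fin n) ℂ,
    (∀ i, (ℓ i).IsHomogeneous 1) ∧ f = ∑ i, ℓ i ^ d}

/-- The border Waring rank of `f` as a form of degree `d`: the least `r` such that there
are homogeneous linear forms `ℓ₁, …, ℓ_r` with coefficients in `ℂ((ε))` whose sum of
`d`-th powers has all coefficients in `ℂ[[ε]]` and is `≡ f (mod ε)`. -/
def borderWaringRank {n : ℕ} (f : MvPolynomial (Fin n) ℂ) (d : ℕ) : ℕ :=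
  sInf {r | ∃ ℓ : Fin r → MvPolynomial (Fin n) (LaurentSeries ℂ),
    (∀ i, (ℓ i).IsHomogeneous 1) ∧ ApproxTo (∑ i, ℓ i ^ d) f}

open Finset
set_option maxHeartbeats 1000000

def Reg (x : LaurentSeries ℂ) : Prop := ∀ k : ℤ, k < 0 → x.coeff k = 0

lemma Reg.mul {x y : LaurentSeries ℂ} (hx : Reg x) (hy : Reg y) : Reg (x * y) := by
  intro k hk
  rw [HahnSeries.coeff_mul]
  refine Finset.sum_eq_zero fun ij hij => ?_
  obtain ⟨-, -, hsum⟩ := Finset.mem_addAntidiagonal.mp hij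
  rcases lt_or_ge ij.1 0 with h | h
  · rw [hx _ h, zero_mul]
  · rw [hy ij.2 (by omega), mul_zero]

lemma Reg.mul_coeff_zero {x y : LaurentSeries ℂ} (hx : Reg x) (hy : Reg y) :
    (x * y).coeff 0 = x.coeff 0 * y.coeff 0 := by
  rw [HahnSeries.coeff_mul]
  refine Finset.sum_eq_single (0, 0) ?_ ?_
  · intro ij hij hne
    obtain ⟨-, -, hsum⟩ := Finset.mem_addAntidiagonal.mp hij
    rcases lt_trichotomy ij.1 0 with h | h | h
    · rw [hx _ h, zero_mul]
    · exact absurd (Prod.ext h (by omega)) hne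
    · rw [hy ij.2 (by omega), mul_zero]
  · intro h
    by_cases hx0 : x.coeff 0 = 0
    · rw [hx0, zero_mul]
    · by_cases hy0 : y.coeff 0 = 0
      · rw [hy0, mul_zero]
      · exact absurd (Finset.mem_addAntidiagonal.mpr
          ⟨(HahnSeries.mem_support x 0).mpr hx0, (HahnSeries.mem_support y 0).mpr hy0,
            add_zero 0⟩) h

section ApproxLemmas
variable {σ : Type*}

lemma coeff_finsum {ι : Type*} (s : Finset ι) (x : ι → LaurentSeries ℂ) (k : ℤ) :
    (∑ i ∈ s, x i).coeff k = ∑ i ∈ s, (x i).coeff k :=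
  map_sum (HahnSeries.coeff.addMonoidHom k) x s

lemma ApproxTo.zero : ApproxTo (0 : MvPolynomial σ (LaurentSeries ℂ)) 0 := by
  constructor <;> intro μ <;> simp

lemma ApproxTo.add {F G : MvPolynomial σ (LaurentSeries ℂ)} {f g : MvPolynomial σ ℂ}
    (hF : ApproxTo F f) (hG : ApproxTo G g) : ApproxTo (F + G) (f + g) := by
  constructor
  · intro μ k hk
    rw [MvPolynomial.coeff_add, HahnSeries.coeff_add, hF.1 μ k hk, hG.1 μ k hk, add_zero]
  · intro μ
    rw [MvPolynomial.coeff_add, HahnSeries.coeff_add, hF.2 μ, hG.2 μ, MvPolynomial.coeff_add]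

lemma ApproxTo.neg {F : MvPolynomial σ (LaurentSeries ℂ)} {f : MvPolynomial σ ℂ}
    (hF : ApproxTo F f) : ApproxTo (-F) (-f) := by
  constructor
  · intro μ k hk
    rw [MvPolynomial.coeff_neg, HahnSeries.coeff_neg, hF.1 μ k hk, neg_zero]
  · intro μ
    rw [MvPolynomial.coeff_neg, HahnSeries.coeff_neg, hF.2 μ, MvPolynomial.coeff_neg]

lemma ApproxTo.sub {F G : MvPolynomial σ (LaurentSeries ℂ)} {f g : MvPolynomial σ ℂ}
    (hF : ApproxTo F f) (hG : ApproxTo G g) : ApproxTo (F - G) (f - g) := by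
  rw [sub_eq_add_neg, sub_eq_add_neg]; exact hF.add hG.neg

lemma ApproxTo.sum {ι : Type*} (s : Finset ι) {F : ι → MvPolynomial σ (LaurentSeries ℂ)}
    {f : ι → MvPolynomial σ ℂ} (h : ∀ i ∈ s, ApproxTo (F i) (f i)) :
    ApproxTo (∑ i ∈ s, F i) (∑ i ∈ s, f i) := by
  classical
  induction s using Finset.induction_on with
  | empty => simpa using ApproxTo.zero
  | insert _ _ hx ih =>
    rw [Finset.sum_insert hx, Finset.sum_insert hx]
    exact (h _ (Finset.mem_insert_self _ _)).add
      (ih fun i hi => h i (Finset.mem_insert_of_mem hi))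

lemma ApproxTo.mul {F G : MvPolynomial σ (LaurentSeries ℂ)} {f g : MvPolynomial σ ℂ}
    (hF : ApproxTo F f) (hG : ApproxTo G g) : ApproxTo (F * G) (f * g) := by
  classical
  constructor
  · intro μ k hk
    rw [MvPolynomial.coeff_mul, coeff_finsum]
    exact Finset.sum_eq_zero fun p _ =>
      Reg.mul (fun k' hk' => hF.1 p.1 k' hk') (fun k' hk' => hG.1 p.2 k' hk') k hk
  · intro μ
    rw [MvPolynomial.coeff_mul, coeff_finsum, MvPolynomial.coeff_mul]
    refine Finset.sum_congr rfl fun p _ => ?_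
    rw [Reg.mul_coeff_zero (fun k' hk' => hF.1 p.1 k' hk') (fun k' hk' => hG.1 p.2 k' hk'),
      hF.2, hG.2]

lemma approx_C {c : LaurentSeries ℂ} (hc : Reg c) :
    ApproxTo (MvPolynomial.C c : MvPolynomial σ (LaurentSeries ℂ)) (MvPolynomial.C (c.coeff 0)) := by
  classical
  constructor
  · intro μ k hk
    rw [MvPolynomial.coeff_C]
    split_ifs
    · exact hc k hk
    · simp
  · intro μ
    rw [MvPolynomial.coeff_C, MvPolynomial.coeff_C]
    split_ifs <;> simp

end ApproxLemmas

section Dilate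
variable {d : ℕ} (hd : 0 < d)

def dilateHom (d : ℕ) : ℤ →+ ℤ := AddMonoidHom.mk' (fun k => (d : ℤ) * k) (fun a b => by ring)

lemma dilateHom_inj (hd : 0 < d) : Function.Injective (dilateHom d) := fun a b h => by
  have : (d : ℤ) ≠ 0 := by exact_mod_cast hd.ne'
  exact mul_left_cancel₀ this h

lemma dilateHom_mono (hd : 0 < d) : ∀ g g' : ℤ, dilateHom d g ≤ dilateHom d g' ↔ g ≤ g' :=
  fun g g' => by
    have : (0:ℤ) < d := by exact_mod_cast hd
    exact mul_le_mul_iff_right₀ this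

def dilate (hd : 0 < d) : LaurentSeries ℂ →+* LaurentSeries ℂ :=
  HahnSeries.embDomainRingHom (dilateHom d) (dilateHom_inj hd) (dilateHom_mono hd)

lemma dilate_coeff_mul (x : LaurentSeries ℂ) (a : ℤ) :
    (dilate hd x).coeff ((d : ℤ) * a) = x.coeff a := by
  rw [dilate, HahnSeries.embDomainRingHom_apply]
  exact HahnSeries.embDomain_coeff

lemma dilate_coeff_zero (x : LaurentSeries ℂ) : (dilate hd x).coeff 0 = x.coeff 0 := by
  simpa using dilate_coeff_mul hd x 0

lemma dilate_reg {x : LaurentSeries ℂ} (hx : Reg x) : Reg (dilate hd x) := by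
  intro k hk
  by_cases h : ∃ a : ℤ, (d : ℤ) * a = k
  · obtain ⟨a, rfl⟩ := h
    rw [dilate_coeff_mul]
    refine hx a ?_
    by_contra hle
    push_neg at hle
    have : (0:ℤ) ≤ (d:ℤ) * a := mul_nonneg (by positivity) hle
    omega
  · rw [dilate, HahnSeries.embDomainRingHom_apply, HahnSeries.embDomain_notin_range]
    simpa [dilateHom] using h

lemma dilate_single (a : ℤ) (r : ℂ) :
    dilate hd (HahnSeries.single a r) = HahnSeries.single ((d : ℤ) * a) r := by
  rw [dilate, HahnSeries.embDomainRingHom_apply]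
  exact HahnSeries.embDomain_single

lemma approx_map {σ : Type*} {F : MvPolynomial σ (LaurentSeries ℂ)} {f : MvPolynomial σ ℂ}
    (h : ApproxTo F f) : ApproxTo (MvPolynomial.map (dilate hd) F) f := by
  constructor
  · intro μ k hk
    rw [MvPolynomial.coeff_map]
    exact dilate_reg hd (fun k' hk' => h.1 μ k' hk') k hk
  · intro μ
    rw [MvPolynomial.coeff_map, dilate_coeff_zero, h.2]

lemma homog_map {σ : Type*} {p : MvPolynomial σ (LaurentSeries ℂ)} {t : ℕ}
    (h : p.IsHomogeneous t) : (MvPolynomial.map (dilate hd) p).IsHomogeneous t := by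
  intro μ hμ
  refine h ?_
  intro h0
  rw [MvPolynomial.coeff_map, h0, map_zero] at hμ
  exact hμ rfl

end Dilate

lemma reg_single {a : ℤ} (ha : 0 ≤ a) (c : ℂ) : Reg (HahnSeries.single a c : LaurentSeries ℂ) := by
  intro k hk
  exact HahnSeries.coeff_single_of_ne (by omega)

lemma reg_hC (c : ℂ) : Reg (HahnSeries.C c : LaurentSeries ℂ) := by
  rw [HahnSeries.C_apply]
  exact reg_single le_rfl c

lemma approx_CC {σ : Type*} (c : ℂ) :
    ApproxTo (MvPolynomial.C (HahnSeries.C c) : MvPolynomial σ (LaurentSeries ℂ))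
      (MvPolynomial.C c) := by
  have := approx_C (σ := σ) (reg_hC c)
  rwa [HahnSeries.C_apply, HahnSeries.coeff_single_same] at this


/-- Border Newton identities: if `f ≡ γ ε^{-M} (∏ (1 + ℓ'ᵢ) - 1) (mod ε)` with
`M ≥ 1`, then the border Waring rank of `f` is at most `m`. -/
theorem statement11 {n d m : ℕ} (f : MvPolynomial (Fin n) ℂ) (hf : f.IsHomogeneous d)
    (γ : ℂ) (M : ℕ) (hM : 1 ≤ M)
    (ℓ : Fin m → MvPolynomial (Fin n) (LaurentSeries ℂ))
    (hhom : ∀ i, (ℓ i).IsHomogeneous 1)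
    (happrox : ApproxTo
      (C (HahnSeries.single (-(M : ℤ)) γ) * ((∏ i, (1 + ℓ i)) - 1)) f) :
    borderWaringRank f d ≤ m := by
  unfold borderWaringRank
  classical
  by_cases hf0 : f = 0
  · refine le_trans (Nat.sInf_le ?_) (Nat.zero_le m)
    exact ⟨fun i => i.elim0, fun i => i.elim0, by subst hf0; simpa using ApproxTo.zero⟩
  set s : LaurentSeries ℂ := HahnSeries.single (-(M : ℤ)) γ with hs
  have hγ : γ ≠ 0 := by
    rintro rfl
    refine hf0 ?_
    ext μ
    have hs0 : s = 0 := by rw [hs]; exact map_zero _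
    have h2 := happrox.2 μ
    rw [hs0, map_zero, zero_mul] at h2
    simpa using h2.symm
  -- the elementary symmetric pieces
  set E : ℕ → MvPolynomial (Fin n) (LaurentSeries ℂ) :=
    fun t => C s * aeval ℓ (esymm (Fin m) (LaurentSeries ℂ) t) with hE
  have haeval_esymm : ∀ t, aeval ℓ (esymm (Fin m) (LaurentSeries ℂ) t)
      = ∑ A ∈ powersetCard t univ, ∏ i ∈ A, ℓ i := by
    intro t
    rw [esymm, map_sum]
    exact Finset.sum_congr rfl fun A _ => by rw [map_prod]; simp
  have hEhom : ∀ t, (E t).IsHomogeneous t := by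
    intro t
    rw [hE]
    have : (aeval ℓ (esymm (Fin m) (LaurentSeries ℂ) t)).IsHomogeneous t := by
      rw [haeval_esymm]
      refine IsHomogeneous.sum _ _ _ fun A hA => ?_
      have hcard : A.card = t := (Finset.mem_powersetCard.mp hA).2
      have := IsHomogeneous.prod A ℓ (fun _ => 1) (fun i _ => hhom i)
      simpa [hcard] using this
    simpa using (isHomogeneous_C _ s).mul this
  have hsplit : C s * ((∏ i, (1 + ℓ i)) - 1) = ∑ t ∈ Icc 1 m, E t := by
    have hprod : (∏ i, (1 + ℓ i)) = ∑ A ∈ (univ : Finset (Fin m)).powerset, ∏ i ∈ A, ℓ i := by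
      have := Finset.prod_add ℓ (fun _ => (1 : MvPolynomial (Fin n) (LaurentSeries ℂ))) univ
      simp only [Finset.prod_const_one, mul_one] at this
      rw [← this]
      exact Finset.prod_congr rfl fun i _ => add_comm _ _
    have hgroup : (∏ i, (1 + ℓ i)) = ∑ t ∈ range (m + 1),
        aeval ℓ (esymm (Fin m) (LaurentSeries ℂ) t) := by
      rw [hprod, Finset.sum_powerset]
      rw [Finset.card_univ, Fintype.card_fin]
      exact Finset.sum_congr rfl fun t _ => (haeval_esymm t).symm
    have hrange : range (m + 1) = insert 0 (Icc 1 m) := by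
      ext x
      simp only [Finset.mem_range, Finset.mem_insert, Finset.mem_Icc]
      omega
    rw [hgroup, hrange, Finset.sum_insert (by simp), esymm_zero, map_one]
    erw [add_sub_cancel_left]
    rw [Finset.mul_sum]
  have happrox' : ApproxTo (∑ t ∈ Icc 1 m, E t) f := hsplit ▸ happrox
  have hsum_coeff : ∀ μ : Fin n →₀ ℕ, (∑ t ∈ Icc 1 m, E t).coeff μ
      = if μ.degree ∈ Icc 1 m then (E μ.degree).coeff μ else 0 := by
    intro μ
    rw [MvPolynomial.coeff_sum]
    split_ifs with h
    · refine Finset.sum_eq_single_of_mem _ h fun t ht hne => ?_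
      exact (hEhom t).coeff_eq_zero fun hdeg => hne hdeg.symm
    · exact Finset.sum_eq_zero fun t ht => (hEhom t).coeff_eq_zero fun hdeg => h (hdeg ▸ ht)
  have hdm : 1 ≤ d ∧ d ≤ m := by
    by_contra hcon
    refine hf0 ?_
    ext μ
    rw [MvPolynomial.coeff_zero]
    by_cases hdeg : μ.degree = d
    · have h2 := happrox'.2 μ
      rw [hsum_coeff] at h2
      rw [hdeg] at h2
      have hd' : d ∉ Icc 1 m := by
        simp only [Finset.mem_Icc]
        omega
      rw [if_neg hd'] at h2
      simpa using h2.symm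
    · exact hf.coeff_eq_zero hdeg
  have hkey : ∀ t, 1 ≤ t → t ≤ m → ApproxTo (E t) (if t = d then f else 0) := by
    intro t ht1 htm
    have htIcc : t ∈ Icc 1 m := Finset.mem_Icc.mpr ⟨ht1, htm⟩
    constructor
    · intro μ k hk
      by_cases hdeg : μ.degree = t
      · have h1 := happrox'.1 μ k hk
        rw [hsum_coeff, hdeg, if_pos htIcc] at h1
        exact h1
      · rw [(hEhom t).coeff_eq_zero hdeg]
        exact HahnSeries.coeff_zero
    · intro μ
      by_cases hdeg : μ.degree = t
      · have h2 := happrox'.2 μ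
        rw [hsum_coeff, hdeg, if_pos htIcc] at h2
        rw [h2]
        split_ifs with htd
        · rfl
        · exact hf.coeff_eq_zero (by rw [hdeg]; exact fun h => htd h)
      · rw [(hEhom t).coeff_eq_zero hdeg, HahnSeries.coeff_zero]
        split_ifs with htd
        · exact (hf.coeff_eq_zero (htd ▸ hdeg)).symm
        · simp
  set u : LaurentSeries ℂ := HahnSeries.single ((M : ℤ)) γ⁻¹ with hu
  have hus : (C u : MvPolynomial (Fin n) (LaurentSeries ℂ)) * C s = 1 := by
    rw [← map_mul, hu, hs, HahnSeries.single_mul_single, inv_mul_cancel₀ hγ, add_neg_cancel,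
      HahnSeries.single_zero_one, map_one]
  have hpow : ∀ k, 1 ≤ k → k ≤ d →
      ApproxTo (C s * aeval ℓ (psum (Fin m) (LaurentSeries ℂ) k))
        (MvPolynomial.C ((-1 : ℂ) ^ (k + 1) * k) * if k = d then f else 0) := by
    intro k
    induction k using Nat.strong_induction_on with
    | _ k IH =>
    intro hk1 hkd
    have hnewton := psum_eq_mul_esymm_sub_sum (Fin m) (LaurentSeries ℂ) k (by omega)
    have happ : aeval ℓ (psum (Fin m) (LaurentSeries ℂ) k)
        = (-1) ^ (k + 1) * (k : MvPolynomial (Fin n) (LaurentSeries ℂ))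
            * aeval ℓ (esymm (Fin m) (LaurentSeries ℂ) k)
          - ∑ a ∈ (antidiagonal k).filter (fun a => a.1 ∈ Set.Ioo 0 k),
              (-1) ^ a.1 * aeval ℓ (esymm (Fin m) (LaurentSeries ℂ) a.1)
                * aeval ℓ (psum (Fin m) (LaurentSeries ℂ) a.2) := by
      rw [hnewton]
      simp only [map_sub, map_sum, map_mul, map_pow, map_neg, map_one, map_natCast]
    rw [happ]
    rw [mul_sub (α := MvPolynomial (Fin n) (LaurentSeries ℂ))]
    rw [Finset.mul_sum]
    have hX : ApproxTo (C s * ((-1) ^ (k + 1)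
          * (k : MvPolynomial (Fin n) (LaurentSeries ℂ))
          * aeval ℓ (esymm (Fin m) (LaurentSeries ℂ) k)))
        (MvPolynomial.C ((-1 : ℂ) ^ (k + 1) * k) * if k = d then f else 0) := by
      have hconst : ((-1 : MvPolynomial (Fin n) (LaurentSeries ℂ)) ^ (k + 1)
          * (k : MvPolynomial (Fin n) (LaurentSeries ℂ)))
          = C (HahnSeries.C ((-1 : ℂ) ^ (k + 1) * k)) := by
        simp only [map_mul, map_pow, map_neg, map_one, map_natCast]
      have hre : C s * ((-1) ^ (k + 1) * (k : MvPolynomial (Fin n) (LaurentSeries ℂ))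
            * aeval ℓ (esymm (Fin m) (LaurentSeries ℂ) k))
          = C (HahnSeries.C ((-1 : ℂ) ^ (k + 1) * k)) * E k := by
        rw [hconst, hE]; ring
      rw [hre]
      exact (approx_CC _).mul (hkey k hk1 (le_trans hkd hdm.2))
    have hY : ApproxTo (∑ a ∈ (antidiagonal k).filter (fun a => a.1 ∈ Set.Ioo 0 k),
          C s * ((-1) ^ a.1 * aeval ℓ (esymm (Fin m) (LaurentSeries ℂ) a.1)
            * aeval ℓ (psum (Fin m) (LaurentSeries ℂ) a.2)))
        0 := by
      have := ApproxTo.sum ((antidiagonal k).filter (fun a => a.1 ∈ Set.Ioo 0 k))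
        (F := fun a => C s * ((-1) ^ a.1 * aeval ℓ (esymm (Fin m) (LaurentSeries ℂ) a.1)
          * aeval ℓ (psum (Fin m) (LaurentSeries ℂ) a.2)))
        (f := fun _ => 0) ?_
      · simpa using this
      intro a ha
      rw [Finset.mem_filter, Finset.HasAntidiagonal.mem_antidiagonal, Set.mem_Ioo] at ha
      obtain ⟨hsum, h0a, hak⟩ := ha
      have ha1d : a.1 ≠ d := by omega
      have ha2d : a.2 ≠ d := by omega
      have hterm : C s * ((-1) ^ a.1 * aeval ℓ (esymm (Fin m) (LaurentSeries ℂ) a.1)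
            * aeval ℓ (psum (Fin m) (LaurentSeries ℂ) a.2))
          = C (u * (-1 : LaurentSeries ℂ) ^ a.1)
            * (E a.1 * (C s * aeval ℓ (psum (Fin m) (LaurentSeries ℂ) a.2))) := by
        calc C s * ((-1) ^ a.1 * aeval ℓ (esymm (Fin m) (LaurentSeries ℂ) a.1)
              * aeval ℓ (psum (Fin m) (LaurentSeries ℂ) a.2))
            = (C u * C s) * (C s * ((-1) ^ a.1
                * aeval ℓ (esymm (Fin m) (LaurentSeries ℂ) a.1)
                * aeval ℓ (psum (Fin m) (LaurentSeries ℂ) a.2))) := by rw [hus, one_mul]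
          _ = C (u * (-1 : LaurentSeries ℂ) ^ a.1)
              * (E a.1 * (C s * aeval ℓ (psum (Fin m) (LaurentSeries ℂ) a.2))) := by
              rw [map_mul, map_pow, map_neg, map_one, hE]; ring
      beta_reduce
      rw [hterm]
      have hreg : Reg (u * (-1 : LaurentSeries ℂ) ^ a.1) := by
        refine Reg.mul (hu ▸ reg_single (by omega) γ⁻¹) ?_
        have : ((-1 : LaurentSeries ℂ)) ^ a.1 = HahnSeries.C ((-1 : ℂ) ^ a.1) := by
          simp only [map_pow, map_neg, map_one]
        rw [this]; exact reg_hC _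
      have h1 := hkey a.1 (by omega) (by omega)
      rw [if_neg ha1d] at h1
      have h2 := IH a.2 (by omega) (by omega) (by omega)
      rw [if_neg ha2d] at h2
      have := (approx_C (σ := Fin n) hreg).mul (h1.mul h2)
      simpa using this
    have := hX.sub hY
    rwa [sub_zero] at this
  -- final assembly
  have hd0 : 0 < d := hdm.1
  have hfinal := hpow d hdm.1 le_rfl
  rw [if_pos rfl] at hfinal
  set w : ℂ := (-1 : ℂ) ^ (d + 1) * d with hw
  have hw0 : w ≠ 0 := by
    refine mul_ne_zero (pow_ne_zero _ (by norm_num)) ?_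
    exact_mod_cast Nat.cast_ne_zero.mpr (by omega)
  obtain ⟨β, hβ⟩ := IsAlgClosed.exists_pow_nat_eq (k := ℂ) (γ * w⁻¹) hd0
  set L : Fin m → MvPolynomial (Fin n) (LaurentSeries ℂ) :=
    fun j => C (HahnSeries.single (-(M : ℤ)) β) * MvPolynomial.map (dilate hd0) (ℓ j) with hL
  have hLhom : ∀ j, (L j).IsHomogeneous 1 := by
    intro j
    rw [hL]
    simpa using (isHomogeneous_C _ (HahnSeries.single (-(M : ℤ)) β)).mul
      (homog_map hd0 (hhom j))
  have haevalpsum : aeval ℓ (psum (Fin m) (LaurentSeries ℂ) d) = ∑ j, ℓ j ^ d := by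
    simp only [psum, map_sum, map_pow, aeval_X]
  have hscal : (HahnSeries.single (-(M : ℤ)) β : LaurentSeries ℂ) ^ d
      = HahnSeries.single (0 : ℤ) w⁻¹ * dilate hd0 s := by
    rw [HahnSeries.single_pow, hs, dilate_single, HahnSeries.single_mul_single, hβ]
    congr 1
    · rw [zero_add, nsmul_eq_mul]
    · rw [mul_comm γ w⁻¹]
  have hsumL : ∑ j, L j ^ d
      = C (HahnSeries.single (0 : ℤ) w⁻¹)
        * MvPolynomial.map (dilate hd0) (C s * aeval ℓ (psum (Fin m) (LaurentSeries ℂ) d)) := by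
    calc ∑ j, L j ^ d
        = ∑ j, C ((HahnSeries.single (-(M : ℤ)) β : LaurentSeries ℂ) ^ d)
            * (MvPolynomial.map (dilate hd0) (ℓ j)) ^ d := by
          refine Finset.sum_congr rfl fun j _ => ?_
          rw [hL]
          beta_reduce
          rw [mul_pow, map_pow]
      _ = C ((HahnSeries.single (-(M : ℤ)) β : LaurentSeries ℂ) ^ d)
            * ∑ j, (MvPolynomial.map (dilate hd0) (ℓ j)) ^ d := by rw [Finset.mul_sum]
      _ = C (HahnSeries.single (0 : ℤ) w⁻¹)
            * MvPolynomial.map (dilate hd0) (C s * aeval ℓ (psum (Fin m) (LaurentSeries ℂ) d)) := by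
          rw [hscal, haevalpsum, map_mul]
          rw [map_mul (MvPolynomial.map (dilate hd0)), MvPolynomial.map_C, mul_assoc]
          congr 2
          rw [map_sum]
          exact Finset.sum_congr rfl fun j _ => (map_pow (MvPolynomial.map (dilate hd0)) (ℓ j) d).symm
  have happL : ApproxTo (∑ j, L j ^ d) f := by
    rw [hsumL]
    have h1 := (approx_C (σ := Fin n) (reg_single le_rfl w⁻¹)).mul (approx_map hd0 hfinal)
    rw [HahnSeries.coeff_single_same] at h1
    have hval : (MvPolynomial.C w⁻¹ : MvPolynomial (Fin n) ℂ) * (C w * f) = f := by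
      rw [← mul_assoc, ← map_mul, inv_mul_cancel₀ hw0, map_one, one_mul]
    rwa [hval] at h1
  exact Nat.sInf_le ⟨L, hLhom, happL⟩
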